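/- Let s, φ ∈ C¹_FF([0,1]) with bounded derivatives. For every ε > 0 there exists δ > 0 such that for every N ∈ ℕ with step size Δ = 1/N ≤ δ, if s̄, φ̄ ∈ ℝ^{N+1} are the discretizations s̄(j) = s(j/N), φ̄(j) = φ(j/N), then |CDTW(s,φ) − DTW_ω(s̄,φ̄)| < ε, where DTW_ω is the weighted discrete dynamic time warping divergence. -/

import Mathlib

open Set MeasureTheory

/-- `g` is piecewise-C¹ on `[0,1]`: continuous, differentiable except at finitely many
points, with derivative continuous off that finite exceptional set. -/
def PiecewiseC1 (g : ℝ → ℝ) : Prop :=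
  ContinuousOn g (Set.Icc 0 1) ∧
  ∃ S : Finset ℝ,
    (∀ x ∈ Set.Icc (0:ℝ) 1 \ S, DifferentiableAt ℝ g x) ∧
    ContinuousOn (deriv g) (Set.Icc 0 1 \ S)

/-- `g` has finitely many flat regions: the zero set of `g'` in `[0,1]` has finitely many
connected components. -/
def FiniteFlats (g : ℝ → ℝ) : Prop :=
  {C : Set ℝ | ∃ x ∈ {y ∈ Set.Icc (0:ℝ) 1 | deriv g y = 0},
      C = connectedComponentIn {y ∈ Set.Icc (0:ℝ) 1 | deriv g y = 0} x}.Finite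

/-- The class C¹_FF([0,1]). -/
def C1FF (g : ℝ → ℝ) : Prop := PiecewiseC1 g ∧ FiniteFlats g

/-- The set 𝒢 of admissible time warps: C¹_FF, non-decreasing on `[0,1]`,
with `g 0 = 0` and `g 1 = 1`. -/
def InG (g : ℝ → ℝ) : Prop :=
  C1FF g ∧ MonotoneOn g (Set.Icc 0 1) ∧ g 0 = 0 ∧ g 1 = 1

/-- Cost of the continuous warping path `γ(t) = (g₁ t, g₂ t)`. -/
noncomputable def warpCost (s φ g₁ g₂ : ℝ → ℝ) : ℝ :=
  ∫ t in (0:ℝ)..1, |s (g₁ t) - φ (g₂ t)| * (deriv g₁ t + deriv g₂ t)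

/-- Continuous dynamic time warping divergence: infimum of warp costs over `𝒢 × 𝒢`. -/
noncomputable def CDTW (s φ : ℝ → ℝ) : ℝ :=
  sInf {c : ℝ | ∃ g₁ g₂ : ℝ → ℝ, InG g₁ ∧ InG g₂ ∧ warpCost s φ g₁ g₂ = c}

/-- An admissible discrete warping path of length `L` for series of length `N+1`. -/
def DTWPath (N L : ℕ) (g1 g2 : ℕ → ℕ) : Prop :=
  g1 0 = 0 ∧ g2 0 = 0 ∧ g1 L = N ∧ g2 L = N ∧ N ≤ L ∧ L ≤ 2 * N ∧
  (∀ j < L, g1 j ≤ g1 (j + 1) ∧ g1 (j + 1) ≤ g1 j + 1) ∧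
  (∀ j < L, g2 j ≤ g2 (j + 1) ∧ g2 (j + 1) ≤ g2 j + 1)

/-- The weighted discrete DTW divergence `DTW_ω`, with weights
`ω_i = (|ḡ₁(i) − ḡ₁(i−1)| + |ḡ₂(i) − ḡ₂(i−1)|) / N`. -/
noncomputable def DTWw (N : ℕ) (sb fb : ℕ → ℝ) : ℝ :=
  sInf {c : ℝ | ∃ (L : ℕ) (g1 g2 : ℕ → ℕ), DTWPath N L g1 g2 ∧
    (∑ i ∈ Finset.range L,
      |sb (g1 (i + 1)) - fb (g2 (i + 1))| *
        ((|(g1 (i + 1) : ℝ) - (g1 i : ℝ)| + |(g2 (i + 1) : ℝ) - (g2 i : ℝ)|) / N)) = c}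


open Filter Topology


lemma deriv_nonneg_of_monotoneOn {g : ℝ → ℝ} (hg : MonotoneOn g (Set.Icc 0 1))
    {t : ℝ} (ht : t ∈ Set.Icc (0:ℝ) 1) : 0 ≤ deriv g t := by
  by_cases hdiff : DifferentiableAt ℝ g t
  · have hd : Tendsto (slope g t) (𝓝[≠] t) (𝓝 (deriv g t)) :=
      hasDerivAt_iff_tendsto_slope.1 hdiff.hasDerivAt
    rcases lt_or_eq_of_le ht.2 with h1 | h1
    · have hlim : Tendsto (slope g t) (𝓝[>] t) (𝓝 (deriv g t)) :=
        hd.mono_left (nhdsWithin_mono _ (fun x hx => ne_of_gt hx))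
      refine ge_of_tendsto hlim ?_
      filter_upwards [Ioo_mem_nhdsGT_of_mem (Set.mem_Ico.2 ⟨le_refl t, h1⟩)] with u hu
      have hu1 : u ∈ Set.Icc (0:ℝ) 1 := ⟨le_trans ht.1 hu.1.le, hu.2.le⟩
      rw [slope_def_field]
      exact div_nonneg (by linarith [hg ht hu1 hu.1.le]) (by linarith [hu.1])
    · have hlim : Tendsto (slope g t) (𝓝[<] t) (𝓝 (deriv g t)) :=
        hd.mono_left (nhdsWithin_mono _ (fun x hx => ne_of_lt hx))
      refine ge_of_tendsto hlim ?_
      have h0t : (0:ℝ) < t := by rw [h1]; norm_num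
      filter_upwards [Ioo_mem_nhdsLT_of_mem (Set.mem_Ioc.2 ⟨h0t, le_refl t⟩)] with u hu
      have hu1 : u ∈ Set.Icc (0:ℝ) 1 := ⟨hu.1.le, le_trans hu.2.le ht.2⟩
      rw [slope_def_field]
      exact div_nonneg_iff.2 (Or.inr ⟨by linarith [hg hu1 ht hu.2.le], by linarith [hu.2]⟩)
  · rw [deriv_zero_of_not_differentiableAt hdiff]

lemma lipschitz_of_bddDeriv {f : ℝ → ℝ} (hc : ContinuousOn f (Set.Icc 0 1))
    (S : Finset ℝ) (hd : ∀ x ∈ Set.Icc (0:ℝ) 1 \ S, DifferentiableAt ℝ f x)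
    {M : ℝ} (hM : ∀ x ∈ Set.Icc (0:ℝ) 1, |deriv f x| ≤ M) :
    ∀ x ∈ Set.Icc (0:ℝ) 1, ∀ y ∈ Set.Icc (0:ℝ) 1, |f y - f x| ≤ M * |y - x| := by
  -- main step: for x ≤ y, by induction on the number of bad points in (x,y)
  have key : ∀ (n : ℕ) (x y : ℝ), x ∈ Set.Icc (0:ℝ) 1 → y ∈ Set.Icc (0:ℝ) 1 → x ≤ y →
      (S.filter (· ∈ Set.Ioo x y)).card ≤ n → |f y - f x| ≤ M * (y - x) := by
    intro n
    induction n with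
    | zero =>
      intro x y hx hy hxy hcard
      rcases eq_or_lt_of_le hxy with rfl | hlt
      · simp
      · have hIoo : ∀ z ∈ Set.Ioo x y, z ∉ S := by
          intro z hz hzS
          have hemp := Finset.card_eq_zero.1 (Nat.le_zero.1 hcard)
          rw [Finset.eq_empty_iff_forall_notMem] at hemp
          exact hemp z (Finset.mem_filter.2 ⟨hzS, hz⟩)
        have hsub : Set.Icc x y ⊆ Set.Icc (0:ℝ) 1 := Set.Icc_subset_Icc hx.1 hy.2
        have hdiff : DifferentiableOn ℝ f (Set.Ioo x y) := by
          intro z hz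
          exact (hd z ⟨hsub (Set.mem_Icc.2 ⟨hz.1.le, hz.2.le⟩), hIoo z hz⟩).differentiableWithinAt
        obtain ⟨c, hc', hceq⟩ := exists_deriv_eq_slope f hlt (hc.mono hsub) hdiff
        have hcI : c ∈ Set.Icc (0:ℝ) 1 := hsub ⟨hc'.1.le, hc'.2.le⟩
        have : |f y - f x| = |deriv f c| * (y - x) := by
          rw [hceq, abs_div, abs_of_pos (by linarith [hc'.1, hc'.2] : (0:ℝ) < y - x),
            div_mul_cancel₀ _ (by linarith [hc'.1, hc'.2] : (y - x) ≠ 0)]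
        rw [this]
        exact mul_le_mul_of_nonneg_right (hM c hcI) (by linarith)
    | succ n ih =>
      intro x y hx hy hxy hcard
      by_cases h0 : (S.filter (· ∈ Set.Ioo x y)).card = 0
      · exact ih x y hx hy hxy (by omega)
      · obtain ⟨z, hz⟩ := Finset.card_pos.1 (Nat.pos_of_ne_zero h0)
        obtain ⟨hzS, hzI⟩ := Finset.mem_filter.1 hz
        have hzIcc : z ∈ Set.Icc (0:ℝ) 1 := ⟨le_trans hx.1 hzI.1.le, le_trans hzI.2.le hy.2⟩
        have h1 : (S.filter (· ∈ Set.Ioo x z)).card ≤ n := by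
          have hsub : S.filter (· ∈ Set.Ioo x z) ⊆ (S.filter (· ∈ Set.Ioo x y)).erase z := by
            intro w hw
            obtain ⟨hwS, hwI⟩ := Finset.mem_filter.1 hw
            refine Finset.mem_erase.2 ⟨ne_of_lt hwI.2, Finset.mem_filter.2 ⟨hwS, hwI.1, lt_trans hwI.2 hzI.2⟩⟩
          calc _ ≤ ((S.filter (· ∈ Set.Ioo x y)).erase z).card := Finset.card_le_card hsub
            _ = (S.filter (· ∈ Set.Ioo x y)).card - 1 := Finset.card_erase_of_mem hz
            _ ≤ n := by omega
        have h2 : (S.filter (· ∈ Set.Ioo z y)).card ≤ n := by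
          have hsub : S.filter (· ∈ Set.Ioo z y) ⊆ (S.filter (· ∈ Set.Ioo x y)).erase z := by
            intro w hw
            obtain ⟨hwS, hwI⟩ := Finset.mem_filter.1 hw
            refine Finset.mem_erase.2 ⟨ne_of_gt hwI.1, Finset.mem_filter.2 ⟨hwS, lt_trans hzI.1 hwI.1, hwI.2⟩⟩
          calc _ ≤ ((S.filter (· ∈ Set.Ioo x y)).erase z).card := Finset.card_le_card hsub
            _ = (S.filter (· ∈ Set.Ioo x y)).card - 1 := Finset.card_erase_of_mem hz
            _ ≤ n := by omega
        have e1 := ih x z hx hzIcc hzI.1.le h1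
        have e2 := ih z y hzIcc hy hzI.2.le h2
        calc |f y - f x| ≤ |f y - f z| + |f z - f x| := abs_sub_le _ _ _
          _ ≤ M * (y - z) + M * (z - x) := add_le_add e2 e1
          _ = M * (y - x) := by ring
  intro x hx y hy
  rcases le_total x y with h | h
  · rw [abs_of_nonneg (by linarith : (0:ℝ) ≤ y - x)]
    exact key _ x y hx hy h le_rfl
  · rw [abs_of_nonpos (by linarith : y - x ≤ 0)]
    have := key (S.filter (· ∈ Set.Ioo y x)).card y x hy hx h le_rfl
    rw [abs_sub_comm] at this
    linarith

lemma ftc_of_piecewise {g : ℝ → ℝ} (hc : ContinuousOn g (Set.Icc 0 1))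
    (S : Finset ℝ) (hd : ∀ x ∈ Set.Icc (0:ℝ) 1 \ S, DifferentiableAt ℝ g x)
    (hm : MonotoneOn g (Set.Icc 0 1)) :
    ∀ a b : ℝ, a ∈ Set.Icc (0:ℝ) 1 → b ∈ Set.Icc (0:ℝ) 1 → a ≤ b →
      IntervalIntegrable (deriv g) volume a b ∧
      (∫ t in a..b, deriv g t) = g b - g a := by
  have key : ∀ (n : ℕ) (a b : ℝ), a ∈ Set.Icc (0:ℝ) 1 → b ∈ Set.Icc (0:ℝ) 1 → a ≤ b →
      (S.filter (· ∈ Set.Ioo a b)).card ≤ n →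
      IntervalIntegrable (deriv g) volume a b ∧ (∫ t in a..b, deriv g t) = g b - g a := by
    intro n
    induction n with
    | zero =>
      intro a b ha hb hab hcard
      have hsub : Set.Icc a b ⊆ Set.Icc (0:ℝ) 1 := Set.Icc_subset_Icc ha.1 hb.2
      have hIoo : ∀ z ∈ Set.Ioo a b, z ∉ S := by
        intro z hz hzS
        have hemp := Finset.card_eq_zero.1 (Nat.le_zero.1 hcard)
        rw [Finset.eq_empty_iff_forall_notMem] at hemp
        exact hemp z (Finset.mem_filter.2 ⟨hzS, hz⟩)
      have hder : ∀ x ∈ Set.Ioo a b, HasDerivAt g (deriv g x) x := by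
        intro x hx
        exact (hd x ⟨hsub (Set.mem_Icc.2 ⟨hx.1.le, hx.2.le⟩), hIoo x hx⟩).hasDerivAt
      have hpos : ∀ x ∈ Set.Ioo a b, 0 ≤ deriv g x := fun x hx =>
        deriv_nonneg_of_monotoneOn hm (hsub (Set.mem_Icc.2 ⟨hx.1.le, hx.2.le⟩))
      have hcont : ContinuousOn g (Set.Icc a b) := hc.mono hsub
      have hint : IntervalIntegrable (deriv g) volume a b := by
        apply intervalIntegral.intervalIntegrable_deriv_of_nonneg (g := g)
        · rwa [Set.uIcc_of_le hab]
        · rwa [min_eq_left hab, max_eq_right hab]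
        · rwa [min_eq_left hab, max_eq_right hab]
      exact ⟨hint, intervalIntegral.integral_eq_sub_of_hasDerivAt_of_le hab hcont hder hint⟩
    | succ n ih =>
      intro a b ha hb hab hcard
      by_cases h0 : (S.filter (· ∈ Set.Ioo a b)).card = 0
      · exact ih a b ha hb hab (by omega)
      · obtain ⟨z, hz⟩ := Finset.card_pos.1 (Nat.pos_of_ne_zero h0)
        obtain ⟨hzS, hzI⟩ := Finset.mem_filter.1 hz
        have hzIcc : z ∈ Set.Icc (0:ℝ) 1 := ⟨le_trans ha.1 hzI.1.le, le_trans hzI.2.le hb.2⟩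
        have h1 : (S.filter (· ∈ Set.Ioo a z)).card ≤ n := by
          have hsub : S.filter (· ∈ Set.Ioo a z) ⊆ (S.filter (· ∈ Set.Ioo a b)).erase z := by
            intro w hw
            obtain ⟨hwS, hwI⟩ := Finset.mem_filter.1 hw
            exact Finset.mem_erase.2 ⟨ne_of_lt hwI.2, Finset.mem_filter.2 ⟨hwS, hwI.1, lt_trans hwI.2 hzI.2⟩⟩
          calc _ ≤ ((S.filter (· ∈ Set.Ioo a b)).erase z).card := Finset.card_le_card hsub
            _ = (S.filter (· ∈ Set.Ioo a b)).card - 1 := Finset.card_erase_of_mem hz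
            _ ≤ n := by omega
        have h2 : (S.filter (· ∈ Set.Ioo z b)).card ≤ n := by
          have hsub : S.filter (· ∈ Set.Ioo z b) ⊆ (S.filter (· ∈ Set.Ioo a b)).erase z := by
            intro w hw
            obtain ⟨hwS, hwI⟩ := Finset.mem_filter.1 hw
            exact Finset.mem_erase.2 ⟨ne_of_gt hwI.1, Finset.mem_filter.2 ⟨hwS, lt_trans hzI.1 hwI.1, hwI.2⟩⟩
          calc _ ≤ ((S.filter (· ∈ Set.Ioo a b)).erase z).card := Finset.card_le_card hsub
            _ = (S.filter (· ∈ Set.Ioo a b)).card - 1 := Finset.card_erase_of_mem hz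
            _ ≤ n := by omega
        obtain ⟨i1, e1⟩ := ih a z ha hzIcc hzI.1.le h1
        obtain ⟨i2, e2⟩ := ih z b hzIcc hb hzI.2.le h2
        refine ⟨i1.trans i2, ?_⟩
        rw [← intervalIntegral.integral_add_adjacent_intervals i1 i2, e1, e2]
        ring
  intro a b ha hb hab
  exact key _ a b ha hb hab le_rfl


lemma comps_finite {Z : Set ℝ} {F : Set ℝ} (hF : F.Finite) (n : ℕ) (U : ℕ → Set ℝ)
    (hUconn : ∀ k, IsPreconnected (U k))
    (hUZ : ∀ k, U k ⊆ Z)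
    (hcover : Z ⊆ F ∪ ⋃ k ∈ Finset.range n, U k) :
    {C : Set ℝ | ∃ x ∈ Z, C = connectedComponentIn Z x}.Finite := by
  have himg : {C : Set ℝ | ∃ x ∈ Z, C = connectedComponentIn Z x}
      = (fun x => connectedComponentIn Z x) '' Z := by
    ext C
    simp only [Set.mem_setOf_eq, Set.mem_image]
    constructor
    · rintro ⟨x, hx, rfl⟩; exact ⟨x, hx, rfl⟩
    · rintro ⟨x, hx, rfl⟩; exact ⟨x, hx, rfl⟩
  rw [himg]
  have hsub : (fun x => connectedComponentIn Z x) '' Z ⊆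
      ((fun x => connectedComponentIn Z x) '' F) ∪
      ⋃ k ∈ Finset.range n, (fun x => connectedComponentIn Z x) '' (U k) := by
    intro C hC
    obtain ⟨x, hx, rfl⟩ := hC
    rcases hcover hx with h | h
    · exact Or.inl ⟨x, h, rfl⟩
    · simp only [Set.mem_iUnion] at h
      obtain ⟨k, hk, hxk⟩ := h
      exact Or.inr (Set.mem_iUnion₂.2 ⟨k, hk, ⟨x, hxk, rfl⟩⟩)
  refine Set.Finite.subset ?_ hsub
  refine Set.Finite.union (hF.image _) ?_
  refine Set.Finite.biUnion (Finset.range n).finite_toSet ?_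
  intro k _
  -- image of U k is a subsingleton
  apply Set.Subsingleton.finite
  rintro C ⟨x, hx, rfl⟩ D ⟨y, hy, rfl⟩
  have hxy : y ∈ connectedComponentIn Z x :=
    (hUconn k).subset_connectedComponentIn hx (hUZ k) hy
  show connectedComponentIn Z x = connectedComponentIn Z y
  exact connectedComponentIn_eq hxy

lemma InG_id : InG (fun x : ℝ => x) := by
  refine ⟨⟨⟨continuous_id.continuousOn, ∅, fun x _ => differentiableAt_id, ?_⟩, ?_⟩,
    fun a _ b _ hab => hab, rfl, rfl⟩
  · have : deriv (fun x : ℝ => x) = fun _ => (1:ℝ) := by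
      funext x; simp
    rw [this]; exact continuousOn_const
  · have : {y ∈ Set.Icc (0:ℝ) 1 | deriv (fun x : ℝ => x) y = 0} = ∅ := by
      ext y; simp
    unfold FiniteFlats
    rw [this]
    simp
lemma InG_maps_Icc {g : ℝ → ℝ} (hg : InG g) {t : ℝ} (ht : t ∈ Set.Icc (0:ℝ) 1) :
    g t ∈ Set.Icc (0:ℝ) 1 := by
  obtain ⟨_, hm, h0, h1⟩ := hg
  constructor
  · rw [← h0]; exact hm (Set.left_mem_Icc.2 zero_le_one) ht ht.1
  · rw [← h1]; exact hm ht (Set.right_mem_Icc.2 zero_le_one) ht.2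

lemma warpCost_nonneg {s φ g₁ g₂ : ℝ → ℝ} (h₁ : InG g₁) (h₂ : InG g₂) :
    0 ≤ warpCost s φ g₁ g₂ := by
  apply intervalIntegral.integral_nonneg zero_le_one
  intro u hu
  have d1 := deriv_nonneg_of_monotoneOn h₁.2.1 hu
  have d2 := deriv_nonneg_of_monotoneOn h₂.2.1 hu
  positivity

lemma CDTW_set_nonempty (s φ : ℝ → ℝ) :
    {c : ℝ | ∃ g₁ g₂ : ℝ → ℝ, InG g₁ ∧ InG g₂ ∧ warpCost s φ g₁ g₂ = c}.Nonempty :=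
  ⟨warpCost s φ (fun x => x) (fun x => x), ⟨_, _, InG_id, InG_id, rfl⟩⟩

lemma CDTW_set_bddBelow (s φ : ℝ → ℝ) :
    BddBelow {c : ℝ | ∃ g₁ g₂ : ℝ → ℝ, InG g₁ ∧ InG g₂ ∧ warpCost s φ g₁ g₂ = c} := by
  refine ⟨0, fun c hc => ?_⟩
  obtain ⟨g₁, g₂, h₁, h₂, rfl⟩ := hc
  exact warpCost_nonneg h₁ h₂

lemma DTW_set_nonempty (N : ℕ) (hN : 0 < N) (sb fb : ℕ → ℝ) :
    {c : ℝ | ∃ (L : ℕ) (g1 g2 : ℕ → ℕ), DTWPath N L g1 g2 ∧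
    (∑ i ∈ Finset.range L,
      |sb (g1 (i + 1)) - fb (g2 (i + 1))| *
        ((|(g1 (i + 1) : ℝ) - (g1 i : ℝ)| + |(g2 (i + 1) : ℝ) - (g2 i : ℝ)|) / N)) = c}.Nonempty := by
  refine ⟨_, N, id, id, ⟨rfl, rfl, rfl, rfl, le_rfl, by omega, ?_, ?_⟩, rfl⟩ <;>
    exact fun j _ => ⟨Nat.le_succ j, le_rfl⟩

lemma DTW_set_bddBelow (N : ℕ) (sb fb : ℕ → ℝ) :
    BddBelow {c : ℝ | ∃ (L : ℕ) (g1 g2 : ℕ → ℕ), DTWPath N L g1 g2 ∧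
    (∑ i ∈ Finset.range L,
      |sb (g1 (i + 1)) - fb (g2 (i + 1))| *
        ((|(g1 (i + 1) : ℝ) - (g1 i : ℝ)| + |(g2 (i + 1) : ℝ) - (g2 i : ℝ)|) / N)) = c} := by
  refine ⟨0, fun c hc => ?_⟩
  obtain ⟨L, g1, g2, _, rfl⟩ := hc
  apply Finset.sum_nonneg
  intro i _
  positivity

set_option maxHeartbeats 1000000 in
lemma pl_interp (N L : ℕ) (hN : 0 < N) (hL : 0 < L) (p : ℕ → ℕ)
    (hp0 : p 0 = 0) (hpL : p L = N)
    (hstep : ∀ j < L, p j ≤ p (j+1) ∧ p (j+1) ≤ p j + 1) :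
    ∃ G : ℝ → ℝ, InG G ∧ (∀ k ≤ L, G ((k:ℝ)/L) = (p k : ℝ)/N) ∧
      (∀ k, k < L → ∀ t ∈ Set.Ioo ((k:ℝ)/L) (((k:ℝ)+1)/L),
        HasDerivAt G ((L:ℝ) * ((p (k+1) - p k : ℕ):ℝ) / N) t) ∧
      Monotone G := by
  classical
  have hNR : (0:ℝ) < N := by exact_mod_cast hN
  have hLR : (0:ℝ) < L := by exact_mod_cast hL
  set d : ℕ → ℝ := fun i => ((p (i+1) - p i : ℕ) : ℝ) with hddef
  have hd0 : ∀ i, 0 ≤ d i := fun i => Nat.cast_nonneg _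
  have hdsub : ∀ i < L, d i = (p (i+1) : ℝ) - (p i : ℝ) := by
    intro i hi
    rw [hddef]
    push_cast [Nat.cast_sub (hstep i hi).1]
    ring
  have hdsum : ∀ k, k ≤ L → ∑ i ∈ Finset.range k, d i = (p k : ℝ) := by
    intro k hk
    have : ∑ i ∈ Finset.range k, d i = ∑ i ∈ Finset.range k, ((p (i+1) : ℝ) - (p i : ℝ)) :=
      Finset.sum_congr rfl (fun i hi => hdsub i (lt_of_lt_of_le (Finset.mem_range.1 hi) hk))
    rw [this, Finset.sum_range_sub (fun i => (p i : ℝ)), hp0]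
    simp
  set ramp : ℝ → ℝ := fun t => max 0 (min 1 t) with hrampdef
  have hrampc : Continuous ramp := continuous_const.max (continuous_const.min continuous_id)
  have hrampm : Monotone ramp := fun a b hab => max_le_max le_rfl (min_le_min le_rfl hab)
  have ramp0 : ∀ t : ℝ, t ≤ 0 → ramp t = 0 := by
    intro t ht
    rw [hrampdef]
    simp only
    rw [max_eq_left (le_trans (min_le_right 1 t) ht)]
  have ramp1 : ∀ t : ℝ, 1 ≤ t → ramp t = 1 := by
    intro t ht
    rw [hrampdef]
    simp only
    rw [min_eq_left ht, max_eq_right zero_le_one]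
  have rampid : ∀ t : ℝ, 0 ≤ t → t ≤ 1 → ramp t = t := by
    intro t h0 h1
    rw [hrampdef]
    simp only
    rw [min_eq_right h1, max_eq_right h0]
  set G : ℝ → ℝ := fun t => (∑ i ∈ Finset.range L, d i * ramp ((L:ℝ)*t - i)) / N with hGdef
  have hGcont : Continuous G := by
    apply Continuous.div_const
    apply continuous_finset_sum
    intro i _
    exact continuous_const.mul (hrampc.comp (((continuous_const.mul continuous_id).sub continuous_const)))
  have hGmono : Monotone G := by
    intro a b hab
    have hsum : (∑ i ∈ Finset.range L, d i * ramp ((L:ℝ)*a - i))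
        ≤ ∑ i ∈ Finset.range L, d i * ramp ((L:ℝ)*b - i) :=
      Finset.sum_le_sum fun i _ => mul_le_mul_of_nonneg_left
        (hrampm (sub_le_sub_right (mul_le_mul_of_nonneg_left hab hLR.le) _)) (hd0 i)
    exact div_le_div_of_nonneg_right hsum hNR.le
  -- values at grid points
  have hGval : ∀ k, k ≤ L → G ((k:ℝ)/L) = (p k : ℝ)/N := by
    intro k hk
    have harg : ∀ i : ℕ, (L:ℝ)*((k:ℝ)/L) - i = (k:ℝ) - i := by
      intro i
      field_simp
    have hzero : ∀ i ∈ Finset.range L, i ∉ Finset.range k → d i * ramp ((L:ℝ)*((k:ℝ)/L) - i) = 0 := by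
      intro i _ hik
      rw [Finset.mem_range, not_lt] at hik
      have hik' : (k:ℝ) ≤ i := by exact_mod_cast hik
      rw [harg i, ramp0 _ (by linarith)]
      ring
    have hsub : Finset.range k ⊆ Finset.range L := Finset.range_subset_range.2 hk
    have e1 : ∑ i ∈ Finset.range k, d i * ramp ((L:ℝ)*((k:ℝ)/L) - i)
        = ∑ i ∈ Finset.range L, d i * ramp ((L:ℝ)*((k:ℝ)/L) - i) :=
      Finset.sum_subset hsub hzero
    have e2 : ∑ i ∈ Finset.range k, d i * ramp ((L:ℝ)*((k:ℝ)/L) - i)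
        = ∑ i ∈ Finset.range k, d i := by
      apply Finset.sum_congr rfl
      intro i hi
      rw [Finset.mem_range] at hi
      have hi' : (i:ℝ) + 1 ≤ k := by exact_mod_cast hi
      rw [harg i, ramp1 _ (by linarith)]
      ring
    rw [hGdef]
    simp only
    rw [← e1, e2, hdsum k hk]
  -- derivative on open pieces
  have hGderiv : ∀ k, k < L → ∀ t ∈ Set.Ioo ((k:ℝ)/L) (((k:ℝ)+1)/L),
      HasDerivAt G ((L:ℝ) * d k / N) t := by
    intro k hk t ht
    have hloc : ∀ u ∈ Set.Ioo ((k:ℝ)/L) (((k:ℝ)+1)/L),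
        G u = ((p k : ℝ) + ((L:ℝ)*u - (k:ℝ)) * d k)/N := by
      intro u hu
      have hu1 : (k:ℝ) < (L:ℝ)*u := by
        have := hu.1
        rw [div_lt_iff₀ hLR] at this
        linarith [mul_comm u (L:ℝ)]
      have hu2 : (L:ℝ)*u < (k:ℝ)+1 := by
        have := hu.2
        rw [lt_div_iff₀ hLR] at this
        linarith [mul_comm u (L:ℝ)]
      have hzero : ∀ i ∈ Finset.range L, i ∉ Finset.range (k+1) → d i * ramp ((L:ℝ)*u - i) = 0 := by
        intro i _ hik
        rw [Finset.mem_range, not_lt] at hik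
        have : ((k:ℝ)+1) ≤ i := by exact_mod_cast hik
        rw [ramp0 _ (by linarith)]
        ring
      have hsub : Finset.range (k+1) ⊆ Finset.range L := Finset.range_subset_range.2 hk
      have e1 : ∑ i ∈ Finset.range (k+1), d i * ramp ((L:ℝ)*u - i)
          = ∑ i ∈ Finset.range L, d i * ramp ((L:ℝ)*u - i) :=
        Finset.sum_subset hsub hzero
      have e2 : ∑ i ∈ Finset.range (k+1), d i * ramp ((L:ℝ)*u - i)
          = (∑ i ∈ Finset.range k, d i) + ((L:ℝ)*u - (k:ℝ)) * d k := by
        rw [Finset.sum_range_succ]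
        congr 1
        · apply Finset.sum_congr rfl
          intro i hi
          rw [Finset.mem_range] at hi
          have hi' : (i:ℝ) + 1 ≤ k := by exact_mod_cast hi
          rw [ramp1 _ (by linarith)]
          ring
        · rw [rampid _ (by linarith) (by linarith)]
          ring
      rw [hGdef]
      simp only
      rw [← e1, e2, hdsum k hk.le]
    have hlin : HasDerivAt (fun u : ℝ => ((p k : ℝ) + ((L:ℝ)*u - (k:ℝ)) * d k)/N)
        ((L:ℝ) * d k / N) t := by
      have h1 : HasDerivAt (fun u : ℝ => (L:ℝ)*u) (L:ℝ) t := by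
        simpa using (hasDerivAt_id t).const_mul (L:ℝ)
      have h2 : HasDerivAt (fun u : ℝ => (L:ℝ)*u - (k:ℝ)) (L:ℝ) t := h1.sub_const _
      have h3 := (h2.mul_const (d k)).const_add ((p k : ℝ))
      exact h3.div_const _
    apply hlin.congr_of_eventuallyEq
    filter_upwards [Ioo_mem_nhds ht.1 ht.2] with u hu
    exact (hloc u hu)
  -- piece finding
  set S : Finset ℝ := (Finset.range (L+1)).image (fun k : ℕ => (k:ℝ)/L) with hSdef
  have hpiece : ∀ x ∈ Set.Icc (0:ℝ) 1, x ∉ (S : Set ℝ) →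
      ∃ k, k < L ∧ x ∈ Set.Ioo ((k:ℝ)/L) (((k:ℝ)+1)/L) := by
    intro x hx hxS
    have hxne : ∀ k : ℕ, k ≤ L → x ≠ (k:ℝ)/L := by
      intro k hk heq
      apply hxS
      rw [hSdef]
      refine Finset.mem_coe.2 (Finset.mem_image.2 ⟨k, Finset.mem_range.2 (by omega), heq.symm⟩)
    set k := ⌊x * L⌋₊ with hkdef
    have hxL0 : 0 ≤ x * L := mul_nonneg hx.1 hLR.le
    have hk1 : (k:ℝ) ≤ x * L := Nat.floor_le hxL0
    have hk2 : x * L < (k:ℝ) + 1 := Nat.lt_floor_add_one _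
    have hkL : k ≤ L := by
      have hb : x * L ≤ ((L:ℕ):ℝ) := by
        push_cast
        nlinarith [hx.2]
      calc k ≤ ⌊((L:ℕ):ℝ)⌋₊ := Nat.floor_mono hb
        _ = L := Nat.floor_natCast L
    have hkltL : k < L := by
      rcases lt_or_eq_of_le hkL with hlt | heq
      · exact hlt
      · exfalso
        have hxge : (1:ℝ) ≤ x := by
          rw [heq] at hk1
          nlinarith
        have hx1 : x = 1 := le_antisymm hx.2 hxge
        refine hxne L le_rfl ?_
        rw [hx1, div_self (ne_of_gt hLR)]
    refine ⟨k, hkltL, ?_, ?_⟩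
    · rcases lt_or_eq_of_le hk1 with hlt | heq
      · rw [div_lt_iff₀ hLR]
        linarith [mul_comm x (L:ℝ)]
      · exfalso
        refine hxne k hkL ?_
        rw [eq_div_iff (ne_of_gt hLR)]
        linarith [mul_comm x (L:ℝ)]
    · rw [lt_div_iff₀ hLR]
      linarith [mul_comm x (L:ℝ)]
  have hpieceIcc : ∀ k, k < L → Set.Ioo ((k:ℝ)/L) (((k:ℝ)+1)/L) ⊆ Set.Icc (0:ℝ) 1 := by
    intro k hk u hu
    constructor
    · have h0 : (0:ℝ) ≤ (k:ℝ)/L := by positivity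
      linarith [hu.1]
    · have h1 : ((k:ℝ)+1)/L ≤ 1 := by
        rw [div_le_one hLR]
        exact_mod_cast hk
      linarith [hu.2]
  have hG0 : G 0 = 0 := by
    have := hGval 0 (by omega)
    norm_num [hp0] at this
    exact this
  have hG1 : G 1 = 1 := by
    have := hGval L le_rfl
    rw [div_self (ne_of_gt hLR), hpL, div_self (ne_of_gt hNR)] at this
    exact this
  have hderivval : ∀ k, k < L → ∀ u ∈ Set.Ioo ((k:ℝ)/L) (((k:ℝ)+1)/L),
      deriv G u = (L:ℝ) * d k / N := fun k hk u hu => (hGderiv k hk u hu).deriv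
  have hInG : InG G := by
    refine ⟨⟨⟨hGcont.continuousOn, S, ?_, ?_⟩, ?_⟩, hGmono.monotoneOn _, hG0, hG1⟩
    · intro x hx
      obtain ⟨k, hk, hmem⟩ := hpiece x hx.1 hx.2
      exact (hGderiv k hk x hmem).differentiableAt
    · intro x hx
      obtain ⟨k, hk, hmem⟩ := hpiece x hx.1 hx.2
      apply ContinuousAt.continuousWithinAt
      apply Filter.EventuallyEq.continuousAt (y := (L:ℝ) * d k / N)
      filter_upwards [Ioo_mem_nhds hmem.1 hmem.2] with u hu
      exact hderivval k hk u hu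
    · apply comps_finite (S.finite_toSet) L
        (fun k => if k < L ∧ p (k+1) = p k then Set.Ioo ((k:ℝ)/L) (((k:ℝ)+1)/L) else ∅)
      · intro k
        split
        · exact isPreconnected_Ioo
        · exact isPreconnected_empty
      · intro k
        split
        · rename_i hcond
          intro u hu
          refine ⟨hpieceIcc k hcond.1 hu, ?_⟩
          rw [hderivval k hcond.1 u hu]
          have hdz : d k = 0 := by
            rw [hddef]
            simp only
            rw [hcond.2]
            simp
          rw [hdz]
          ring
        · exact empty_subset _
      · intro x hx
        by_cases hxS : x ∈ (S : Set ℝ)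
        · exact Or.inl hxS
        · obtain ⟨k, hk, hmem⟩ := hpiece x hx.1 hxS
          right
          have hdk : d k = 0 := by
            have hz := hx.2
            rw [hderivval k hk x hmem] at hz
            have hL0 : (L:ℝ) ≠ 0 := ne_of_gt hLR
            have hN0 : (N:ℝ) ≠ 0 := ne_of_gt hNR
            rcases mul_eq_zero.1 hz with h | h
            · rcases mul_eq_zero.1 h with h' | h'
              · exact absurd h' hL0
              · exact h'
            · exact absurd (inv_eq_zero.1 h) hN0
          have hpk : p (k+1) = p k := by
            have h1 := (hstep k hk).1
            rw [hddef] at hdk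
            simp only at hdk
            have h2 : (p (k+1) - p k : ℕ) = 0 := by exact_mod_cast hdk
            omega
          apply Set.mem_iUnion₂.2
          exact ⟨k, Finset.mem_range.2 hk, by rw [if_pos ⟨hk, hpk⟩]; exact hmem⟩
  exact ⟨G, hInG, hGval, fun k hk => hGderiv k hk, hGmono⟩

set_option maxHeartbeats 2000000 in
lemma direction1 {s φ g₁ g₂ : ℝ → ℝ} (hg₁ : InG g₁) (hg₂ : InG g₂)
    (hsc : ContinuousOn s (Set.Icc 0 1)) (hφc : ContinuousOn φ (Set.Icc 0 1))
    {Ms Mφ : ℝ} (hMs0 : 0 ≤ Ms) (hMφ0 : 0 ≤ Mφ)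
    (hLs : ∀ x ∈ Set.Icc (0:ℝ) 1, ∀ y ∈ Set.Icc (0:ℝ) 1, |s y - s x| ≤ Ms * |y - x|)
    (hLφ : ∀ x ∈ Set.Icc (0:ℝ) 1, ∀ y ∈ Set.Icc (0:ℝ) 1, |φ y - φ x| ≤ Mφ * |y - x|)
    (N : ℕ) (hN : 0 < N) :
    ∃ (L : ℕ) (p q : ℕ → ℕ), DTWPath N L p q ∧
      (∑ i ∈ Finset.range L,
        |s ((p (i + 1) : ℝ) / N) - φ ((q (i + 1) : ℝ) / N)| *
          ((|(p (i + 1) : ℝ) - (p i : ℝ)| + |(q (i + 1) : ℝ) - (q i : ℝ)|) / N))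
        ≤ warpCost s φ g₁ g₂ + 4 * (Ms + Mφ) / N := by
  classical
  have hNR : (0:ℝ) < N := by exact_mod_cast hN
  set K := Ms + Mφ with hK
  have hK0 : 0 ≤ K := by positivity
  obtain ⟨⟨⟨hc₁, S₁, hd₁, -⟩, -⟩, hm₁, h₁0, h₁1⟩ := id hg₁
  obtain ⟨⟨⟨hc₂, S₂, hd₂, -⟩, -⟩, hm₂, h₂0, h₂1⟩ := id hg₂
  have ftc₁ := ftc_of_piecewise hc₁ S₁ hd₁ hm₁
  have ftc₂ := ftc_of_piecewise hc₂ S₂ hd₂ hm₂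
  set h : ℝ → ℝ := fun t => g₁ t + g₂ t with hh
  have hhc : ContinuousOn h (Set.Icc 0 1) := hc₁.add hc₂
  have hhm : MonotoneOn h (Set.Icc 0 1) := hm₁.add hm₂
  have h0 : h 0 = 0 := by simp [hh, h₁0, h₂0]
  have h1 : h 1 = 2 := by simp [hh, h₁1, h₂1]; norm_num
  set D : ℝ → ℝ := fun t => deriv g₁ t + deriv g₂ t with hD
  have hDnn : ∀ t ∈ Set.Icc (0:ℝ) 1, 0 ≤ D t := fun t ht =>
    add_nonneg (deriv_nonneg_of_monotoneOn hm₁ ht) (deriv_nonneg_of_monotoneOn hm₂ ht)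
  have hDint : ∀ a b : ℝ, a ∈ Set.Icc (0:ℝ) 1 → b ∈ Set.Icc (0:ℝ) 1 → a ≤ b →
      IntervalIntegrable D volume a b :=
    fun a b ha hb hab => (ftc₁ a b ha hb hab).1.add (ftc₂ a b ha hb hab).1
  have hDval : ∀ a b : ℝ, a ∈ Set.Icc (0:ℝ) 1 → b ∈ Set.Icc (0:ℝ) 1 → a ≤ b →
      (∫ t in a..b, D t) = h b - h a := by
    intro a b ha hb hab
    have e := intervalIntegral.integral_add (ftc₁ a b ha hb hab).1 (ftc₂ a b ha hb hab).1
    rw [hD, e, (ftc₁ a b ha hb hab).2, (ftc₂ a b ha hb hab).2]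
    simp only [hh]; ring
  set Fγ : ℝ → ℝ := fun t => |s (g₁ t) - φ (g₂ t)| with hFγ
  have hFγcont : ContinuousOn Fγ (Set.Icc 0 1) := by
    apply ContinuousOn.abs
    exact (hsc.comp hc₁ (fun t ht => InG_maps_Icc hg₁ ht)).sub
      (hφc.comp hc₂ (fun t ht => InG_maps_Icc hg₂ ht))
  set Cb := Ms + |s 0 - φ 0| + Mφ with hCbdef
  have hCb : ∀ t ∈ Set.Icc (0:ℝ) 1, Fγ t ≤ Cb := by
    intro t ht
    have hx := InG_maps_Icc hg₁ ht
    have hy := InG_maps_Icc hg₂ ht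
    have e1 : |s (g₁ t) - s 0| ≤ Ms * |g₁ t - 0| := hLs 0 ⟨le_rfl, zero_le_one⟩ (g₁ t) hx
    have e2 : |φ (g₂ t) - φ 0| ≤ Mφ * |g₂ t - 0| := hLφ 0 ⟨le_rfl, zero_le_one⟩ (g₂ t) hy
    have b1 : |g₁ t - 0| ≤ 1 := by rw [sub_zero, abs_of_nonneg hx.1]; exact hx.2
    have b2 : |g₂ t - 0| ≤ 1 := by rw [sub_zero, abs_of_nonneg hy.1]; exact hy.2
    have tri : Fγ t ≤ |s (g₁ t) - s 0| + |s 0 - φ 0| + |φ 0 - φ (g₂ t)| := by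
      calc Fγ t ≤ |s (g₁ t) - s 0| + |s 0 - φ (g₂ t)| := abs_sub_le _ _ _
        _ ≤ |s (g₁ t) - s 0| + (|s 0 - φ 0| + |φ 0 - φ (g₂ t)|) := by
            linarith [abs_sub_le (s 0) (φ 0) (φ (g₂ t))]
        _ = _ := by ring
    rw [abs_sub_comm (φ 0)] at tri
    have : |s (g₁ t) - s 0| ≤ Ms := by nlinarith
    have : |φ (g₂ t) - φ 0| ≤ Mφ := by nlinarith
    rw [hCbdef]; linarith [tri]
  set FD : ℝ → ℝ := fun t => |s (g₁ t) - φ (g₂ t)| * (deriv g₁ t + deriv g₂ t) with hFD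
  have hFDeq : ∀ t, FD t = Fγ t * D t := fun t => rfl
  have hFDnn : ∀ t ∈ Set.Icc (0:ℝ) 1, 0 ≤ FD t := fun t ht =>
    mul_nonneg (abs_nonneg _) (hDnn t ht)
  have hwc : warpCost s φ g₁ g₂ = ∫ t in (0:ℝ)..1, FD t := rfl
  have hFDint : ∀ a b : ℝ, a ∈ Set.Icc (0:ℝ) 1 → b ∈ Set.Icc (0:ℝ) 1 → a ≤ b →
      IntervalIntegrable FD volume a b := by
    intro a b ha hb hab
    have hsub : Set.Ioo a b ⊆ Set.Icc (0:ℝ) 1 := fun t ht => ⟨le_trans ha.1 ht.1.le, le_trans ht.2.le hb.2⟩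
    rw [intervalIntegrable_iff_integrableOn_Ioo_of_le hab]
    have hDInt : IntegrableOn D (Set.Ioo a b) := by
      have := hDint a b ha hb hab
      rwa [intervalIntegrable_iff_integrableOn_Ioo_of_le hab] at this
    apply Integrable.mono' (hDInt.const_mul Cb)
    · apply AEStronglyMeasurable.mul
      · exact (hFγcont.mono hsub).aestronglyMeasurable measurableSet_Ioo
      · exact ((measurable_deriv g₁).add (measurable_deriv g₂)).aestronglyMeasurable
    · filter_upwards [ae_restrict_mem measurableSet_Ioo] with t ht
      have htI : t ∈ Set.Icc (0:ℝ) 1 := hsub ht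
      rw [Real.norm_eq_abs, abs_of_nonneg (hFDnn t htI), hFDeq]
      exact mul_le_mul_of_nonneg_right (hCb t htI) (hDnn t htI)
  -- crossing times
  set T : ℕ → ℝ := fun k => sInf {t | t ∈ Set.Icc (0:ℝ) 1 ∧ (k:ℝ)/N ≤ h t} with hTdef
  have hclosed : ∀ k : ℕ, IsClosed {t | t ∈ Set.Icc (0:ℝ) 1 ∧ (k:ℝ)/N ≤ h t} := by
    intro k
    have : {t | t ∈ Set.Icc (0:ℝ) 1 ∧ (k:ℝ)/N ≤ h t}
        = Set.Icc (0:ℝ) 1 ∩ h ⁻¹' (Set.Ici ((k:ℝ)/N)) := rfl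
    rw [this]
    exact hhc.preimage_isClosed_of_isClosed isClosed_Icc isClosed_Ici
  have hbdd : ∀ k : ℕ, BddBelow {t | t ∈ Set.Icc (0:ℝ) 1 ∧ (k:ℝ)/N ≤ h t} :=
    fun k => ⟨0, fun t ht => ht.1.1⟩
  have hne : ∀ k ≤ 2*N, (1:ℝ) ∈ {t | t ∈ Set.Icc (0:ℝ) 1 ∧ (k:ℝ)/N ≤ h t} := by
    intro k hk
    refine ⟨⟨zero_le_one, le_rfl⟩, ?_⟩
    rw [h1, div_le_iff₀ hNR]
    exact_mod_cast by push_cast; exact_mod_cast (by exact_mod_cast hk : (k:ℝ) ≤ 2*N)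
  have hTmem : ∀ k ≤ 2*N, T k ∈ Set.Icc (0:ℝ) 1 ∧ (k:ℝ)/N ≤ h (T k) :=
    fun k hk => (hclosed k).csInf_mem ⟨1, hne k hk⟩ (hbdd k)
  have hTle : ∀ k : ℕ, ∀ t, t ∈ {t | t ∈ Set.Icc (0:ℝ) 1 ∧ (k:ℝ)/N ≤ h t} → T k ≤ t :=
    fun k t ht => csInf_le (hbdd k) ht
  have hT0 : T 0 = 0 := by
    refine le_antisymm (hTle 0 0 ⟨⟨le_rfl, zero_le_one⟩, by simp [h0]⟩) (hTmem 0 (by omega)).1.1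
  have hTval : ∀ k ≤ 2*N, h (T k) = (k:ℝ)/N := by
    intro k hk
    obtain ⟨hTI, hTge⟩ := hTmem k hk
    by_contra hne'
    have hgt : (k:ℝ)/N < h (T k) := lt_of_le_of_ne hTge (Ne.symm hne')
    have hTpos : 0 < T k := by
      rcases lt_or_eq_of_le hTI.1 with hp | hp
      · exact hp
      · exfalso
        rw [← hp, h0] at hgt
        have : (0:ℝ) ≤ (k:ℝ)/N := by positivity
        linarith
    have hcw : ContinuousWithinAt h (Set.Icc 0 1) (T k) := hhc _ hTI
    have hev : h ⁻¹' (Set.Ioi ((k:ℝ)/N)) ∈ 𝓝[Set.Icc (0:ℝ) 1] (T k) := hcw (Ioi_mem_nhds hgt)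
    have hmono' : 𝓝[Set.Ico (0:ℝ) (T k)] (T k) ≤ 𝓝[Set.Icc (0:ℝ) 1] (T k) :=
      nhdsWithin_mono _ (fun u hu => ⟨hu.1, le_trans hu.2.le hTI.2⟩)
    have hNB : (𝓝[Set.Ico (0:ℝ) (T k)] (T k)).NeBot := by
      rw [← mem_closure_iff_nhdsWithin_neBot, closure_Ico (ne_of_lt hTpos)]
      exact ⟨hTI.1, le_rfl⟩
    have hev2 : ∀ᶠ u in 𝓝[Set.Ico (0:ℝ) (T k)] (T k), u ∈ h ⁻¹' (Set.Ioi ((k:ℝ)/N)) := hmono' hev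
    obtain ⟨u, hugt, huI⟩ := (hev2.and eventually_mem_nhdsWithin).exists
    have : T k ≤ u := hTle k u ⟨⟨huI.1, le_trans huI.2.le hTI.2⟩, le_of_lt hugt⟩
    exact absurd this (not_le.2 huI.2)
  have hTmono : ∀ j k : ℕ, j ≤ k → k ≤ 2*N → T j ≤ T k := by
    intro j k hjk hk
    refine hTle j (T k) ⟨(hTmem k hk).1, ?_⟩
    rw [hTval k hk]
    have hjk' : (j:ℝ) ≤ k := by exact_mod_cast hjk
    gcongr
  have hg2N : g₁ (T (2*N)) = 1 ∧ g₂ (T (2*N)) = 1 := by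
    have hT2 : h (T (2*N)) = 2 := by
      rw [hTval (2*N) le_rfl]
      push_cast
      field_simp
    have hI := (hTmem (2*N) le_rfl).1
    have b1 := (InG_maps_Icc hg₁ hI).2
    have b2 := (InG_maps_Icc hg₂ hI).2
    simp only [hh] at hT2
    constructor <;> linarith
  -- the discrete path
  set A : ℕ → ℕ := fun k => ⌊g₁ (T k) * N⌋₊ with hAdef
  set B : ℕ → ℕ := fun k => k - A k with hBdef
  have hxmem : ∀ k ≤ 2*N, g₁ (T k) ∈ Set.Icc (0:ℝ) 1 :=
    fun k hk => InG_maps_Icc hg₁ (hTmem k hk).1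
  have hxlek : ∀ k ≤ 2*N, g₁ (T k) * N ≤ (k:ℝ) := by
    intro k hk
    have h2 := (InG_maps_Icc hg₂ (hTmem k hk).1).1
    have e := hTval k hk
    simp only [hh] at e
    have hle : g₁ (T k) ≤ (k:ℝ)/N := by linarith
    calc g₁ (T k) * N ≤ ((k:ℝ)/N) * N := mul_le_mul_of_nonneg_right hle hNR.le
      _ = k := by field_simp
  have hAlek : ∀ k ≤ 2*N, A k ≤ k := by
    intro k hk
    calc A k ≤ ⌊((k:ℕ):ℝ)⌋₊ := Nat.floor_mono (hxlek k hk)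
      _ = k := Nat.floor_natCast k
  have hAleN : ∀ k ≤ 2*N, A k ≤ N := by
    intro k hk
    have hb : g₁ (T k) * N ≤ ((N:ℕ):ℝ) := by
      push_cast
      nlinarith [(hxmem k hk).2]
    calc A k ≤ ⌊((N:ℕ):ℝ)⌋₊ := Nat.floor_mono hb
      _ = N := Nat.floor_natCast N
  have hAfloor_le : ∀ k ≤ 2*N, (A k : ℝ) ≤ g₁ (T k) * N :=
    fun k hk => Nat.floor_le (mul_nonneg (hxmem k hk).1 hNR.le)
  have hAfloor_gt : ∀ k : ℕ, g₁ (T k) * N < A k + 1 := fun k => Nat.lt_floor_add_one _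
  have hginc : ∀ k < 2*N, 0 ≤ g₁ (T (k+1)) - g₁ (T k) ∧ g₁ (T (k+1)) - g₁ (T k) ≤ 1/N := by
    intro k hk
    have hTk := (hTmem k (by omega)).1
    have hTk1 := (hTmem (k+1) (by omega)).1
    have hle := hTmono k (k+1) (by omega) (by omega)
    have m2 := hm₂ hTk hTk1 hle
    have m1 := hm₁ hTk hTk1 hle
    refine ⟨by linarith, ?_⟩
    have e1 := hTval k (by omega)
    have e2 := hTval (k+1) (by omega)
    have : h (T (k+1)) - h (T k) = 1/N := by
      rw [e1, e2]; push_cast; ring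
    simp only [hh] at this
    linarith
  have hAmono : ∀ k < 2*N, A k ≤ A (k+1) := by
    intro k hk
    exact Nat.floor_mono (by nlinarith [(hginc k hk).1])
  have hAstep : ∀ k < 2*N, A (k+1) ≤ A k + 1 := by
    intro k hk
    have hlt : g₁ (T (k+1)) * N < ((A k + 2 : ℕ) : ℝ) := by
      push_cast
      have e2 := hAfloor_gt k
      have e3 := (hginc k hk).2
      have e4 : g₁ (T (k+1)) * N ≤ g₁ (T k) * N + 1 := by
        have := mul_le_mul_of_nonneg_right e3 hNR.le
        rw [sub_mul] at this
        have : (1/(N:ℝ)) * N = 1 := by field_simp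
        nlinarith [mul_le_mul_of_nonneg_right e3 hNR.le]
      linarith
    have h5 : A (k+1) < A k + 2 := by
      have := (Nat.floor_lt (mul_nonneg (hxmem (k+1) (by omega)).1 hNR.le)).2 hlt
      simpa [hAdef] using this
    omega
  have hBleN : ∀ k ≤ 2*N, k ≤ N + A k := by
    intro k hk
    rcases le_or_gt k N with hkN | hkN
    · omega
    · have h2 := (InG_maps_Icc hg₂ (hTmem k hk).1).2
      have e := hTval k hk
      simp only [hh] at e
      have hkey : ((k - N : ℕ):ℝ) ≤ g₁ (T k) * N := by
        rw [Nat.cast_sub hkN.le]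
        have : g₁ (T k) * N = (k:ℝ) - g₂ (T k) * N := by
          have : (g₁ (T k) + g₂ (T k)) * N = (k:ℝ) := by
            rw [e]; field_simp
          nlinarith [this]
        rw [this]
        nlinarith [h2, hNR.le]
      have h6 : k - N ≤ A k := by
        have := Nat.le_floor hkey
        simpa [hAdef] using this
      omega
  have hA0 : A 0 = 0 := by
    show ⌊g₁ (T 0) * N⌋₊ = 0
    have e : g₁ (T 0) = 0 := by rw [hT0]; exact h₁0
    rw [e, zero_mul]
    exact Nat.floor_zero
  have hA2N : A (2*N) = N := by
    show ⌊g₁ (T (2*N)) * N⌋₊ = N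
    rw [hg2N.1, one_mul]
    exact Nat.floor_natCast N
  have hB0 : B 0 = 0 := by show 0 - A 0 = 0; omega
  have hB2N : B (2*N) = N := by show 2*N - A (2*N) = N; omega
  have hpath : DTWPath N (2*N) A B := by
    refine ⟨hA0, hB0, hA2N, hB2N, by omega, le_rfl, ?_, ?_⟩
    · exact fun j hj => ⟨hAmono j hj, hAstep j hj⟩
    · intro j hj
      have h1 := hAmono j hj
      have h2 := hAstep j hj
      have h3 := hAlek j (by omega)
      have h4 := hAlek (j+1) (by omega)
      simp only [hBdef]
      omega
  -- per-step estimate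
  have key : ∀ k < 2*N,
      |s ((A (k+1) : ℝ)/N) - φ ((B (k+1) : ℝ)/N)| * (1/N)
        ≤ (∫ t in T k..T (k+1), FD t) + (2*K/N) * (1/N) := by
    intro k hk
    have hk1 : k + 1 ≤ 2*N := by omega
    have hTk := (hTmem k (by omega)).1
    have hTk1 := (hTmem (k+1) hk1).1
    have hTle' := hTmono k (k+1) (by omega) hk1
    set x := g₁ (T (k+1)) with hxdef
    set y := g₂ (T (k+1)) with hydef
    have hxI : x ∈ Set.Icc (0:ℝ) 1 := InG_maps_Icc hg₁ hTk1
    have hyI : y ∈ Set.Icc (0:ℝ) 1 := InG_maps_Icc hg₂ hTk1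
    -- the grid point is close to the curve point
    have hu1 : (A (k+1) : ℝ)/N ≤ x := by
      rw [div_le_iff₀ hNR]
      exact hAfloor_le (k+1) hk1
    have hu2 : x ≤ (A (k+1) : ℝ)/N + 1/N := by
      rw [← add_div, le_div_iff₀ hNR]
      have := hAfloor_gt (k+1)
      push_cast
      linarith
    have huI : (A (k+1) : ℝ)/N ∈ Set.Icc (0:ℝ) 1 := by
      constructor
      · positivity
      · rw [div_le_one hNR]
        exact_mod_cast hAleN (k+1) hk1
    have hud : |(A (k+1) : ℝ)/N - x| ≤ 1/N := by
      rw [abs_le]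
      constructor <;> linarith
    have hBcast : (B (k+1) : ℝ) = (k+1 : ℕ) - (A (k+1) : ℝ) := by
      rw [hBdef]
      push_cast [Nat.cast_sub (hAlek (k+1) hk1)]
      ring
    have hxy : x + y = ((k:ℝ)+1)/N := by
      have e := hTval (k+1) hk1
      simp only [hh] at e
      rw [hxdef, hydef, e]
      push_cast
      ring
    have hvd : |(B (k+1) : ℝ)/N - y| ≤ 1/N := by
      have e : (B (k+1) : ℝ)/N - y = x - (A (k+1) : ℝ)/N := by
        rw [hBcast]
        push_cast
        linear_combination (-1 : ℝ) * hxy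
      rw [e, abs_sub_comm]
      exact hud
    have hvI : (B (k+1) : ℝ)/N ∈ Set.Icc (0:ℝ) 1 := by
      constructor
      · positivity
      · rw [div_le_one hNR]
        have hBN : B (k+1) ≤ N := by
          have := hBleN (k+1) hk1
          simp only [hBdef]
          omega
        exact_mod_cast hBN
    -- step 1 : the discrete integrand is close to Fγ (T (k+1))
    have step1 : |s ((A (k+1) : ℝ)/N) - φ ((B (k+1) : ℝ)/N)| ≤ Fγ (T (k+1)) + K * (1/N) := by
      have e1 : |s ((A (k+1) : ℝ)/N) - s x| ≤ Ms * |(A (k+1) : ℝ)/N - x| :=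
        hLs x hxI _ huI
      have e2 : |φ ((B (k+1) : ℝ)/N) - φ y| ≤ Mφ * |(B (k+1) : ℝ)/N - y| :=
        hLφ y hyI _ hvI
      have e1' : |s ((A (k+1) : ℝ)/N) - s x| ≤ Ms * (1/N) :=
        le_trans e1 (mul_le_mul_of_nonneg_left hud hMs0)
      have e2' : |φ ((B (k+1) : ℝ)/N) - φ y| ≤ Mφ * (1/N) :=
        le_trans e2 (mul_le_mul_of_nonneg_left hvd hMφ0)
      have tri : |s ((A (k+1) : ℝ)/N) - φ ((B (k+1) : ℝ)/N)|
          ≤ |s ((A (k+1) : ℝ)/N) - s x| + |s x - φ y| + |φ y - φ ((B (k+1) : ℝ)/N)| := by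
        calc |s ((A (k+1) : ℝ)/N) - φ ((B (k+1) : ℝ)/N)|
            ≤ |s ((A (k+1) : ℝ)/N) - s x| + |s x - φ ((B (k+1) : ℝ)/N)| := abs_sub_le _ _ _
          _ ≤ |s ((A (k+1) : ℝ)/N) - s x| + (|s x - φ y| + |φ y - φ ((B (k+1) : ℝ)/N)|) := by
              linarith [abs_sub_le (s x) (φ y) (φ ((B (k+1) : ℝ)/N))]
          _ = _ := by ring
      have hFg : Fγ (T (k+1)) = |s x - φ y| := rfl
      rw [abs_sub_comm (φ y)] at tri
      rw [hFg, hK]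
      linarith
    -- step 2 : Fγ (T (k+1)) / N is at most the integral piece plus error
    have step2 : Fγ (T (k+1)) * (1/N) ≤ (∫ t in T k..T (k+1), FD t) + (K/N) * (1/N) := by
      have hss : Set.Icc (T k) (T (k+1)) ⊆ Set.Icc (0:ℝ) 1 :=
        fun t ht => ⟨le_trans hTk.1 ht.1, le_trans ht.2 hTk1.2⟩
      have hpt : ∀ t ∈ Set.Icc (T k) (T (k+1)), (Fγ (T (k+1)) - K * (1/N)) * D t ≤ FD t := by
        intro t ht
        have htI := hss ht
        have m1 : g₁ t ≤ x := hm₁ htI hTk1 ht.2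
        have m2 : g₂ t ≤ y := hm₂ htI hTk1 ht.2
        have mh : h (T k) ≤ h t := hhm hTk htI ht.1
        have hhb : x + y - (g₁ t + g₂ t) ≤ 1/N := by
          have e1 := hTval k (by omega)
          have e2 := hTval (k+1) hk1
          have : h (T (k+1)) - h (T k) = 1/N := by
            rw [e1, e2]; push_cast; ring
          simp only [hh] at this mh ⊢
          linarith
        have e1 : |s x - s (g₁ t)| ≤ Ms * (x - g₁ t) := by
          have := hLs (g₁ t) (InG_maps_Icc hg₁ htI) x hxI
          rwa [abs_of_nonneg (show (0:ℝ) ≤ x - g₁ t by linarith)] at this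
        have e2 : |φ y - φ (g₂ t)| ≤ Mφ * (y - g₂ t) := by
          have := hLφ (g₂ t) (InG_maps_Icc hg₂ htI) y hyI
          rwa [abs_of_nonneg (show (0:ℝ) ≤ y - g₂ t by linarith)] at this
        have tri : Fγ (T (k+1)) ≤ Fγ t + |s x - s (g₁ t)| + |φ y - φ (g₂ t)| := by
          have : |s x - φ y| ≤ |s x - s (g₁ t)| + |s (g₁ t) - φ (g₂ t)| + |φ (g₂ t) - φ y| := by
            calc |s x - φ y| ≤ |s x - s (g₁ t)| + |s (g₁ t) - φ y| := abs_sub_le _ _ _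
              _ ≤ |s x - s (g₁ t)| + (|s (g₁ t) - φ (g₂ t)| + |φ (g₂ t) - φ y|) := by
                  linarith [abs_sub_le (s (g₁ t)) (φ (g₂ t)) (φ y)]
              _ = _ := by ring
          have hFg1 : Fγ (T (k+1)) = |s x - φ y| := rfl
          have hFg2 : Fγ t = |s (g₁ t) - φ (g₂ t)| := rfl
          rw [abs_sub_comm (φ (g₂ t))] at this
          rw [hFg1, hFg2]
          linarith
        have herr : Ms * (x - g₁ t) + Mφ * (y - g₂ t) ≤ K * (1/N) := by
          have b1 : x - g₁ t ≤ x + y - (g₁ t + g₂ t) := by linarith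
          have b2 : y - g₂ t ≤ x + y - (g₁ t + g₂ t) := by linarith
          have hNn : (0:ℝ) ≤ 1/N := by positivity
          rw [hK]
          nlinarith [mul_le_mul_of_nonneg_left (le_trans b1 hhb) hMs0,
            mul_le_mul_of_nonneg_left (le_trans b2 hhb) hMφ0]
        have hFle : Fγ (T (k+1)) - K * (1/N) ≤ Fγ t := by linarith
        have := mul_le_mul_of_nonneg_right hFle (hDnn t htI)
        calc (Fγ (T (k+1)) - K * (1/N)) * D t ≤ Fγ t * D t := this
          _ = FD t := (hFDeq t).symm
      have hint1 : IntervalIntegrable (fun t => (Fγ (T (k+1)) - K * (1/N)) * D t)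
          volume (T k) (T (k+1)) := (hDint _ _ hTk hTk1 hTle').const_mul _
      have hint2 := hFDint _ _ hTk hTk1 hTle'
      have hmono2 := intervalIntegral.integral_mono_on hTle' hint1 hint2 hpt
      rw [intervalIntegral.integral_const_mul, hDval _ _ hTk hTk1 hTle'] at hmono2
      have hba : h (T (k+1)) - h (T k) = 1/N := by
        rw [hTval (k+1) hk1, hTval k (by omega)]; push_cast; ring
      rw [hba] at hmono2
      have expand : (Fγ (T (k+1)) - K * (1/N)) * (1/N)
          = Fγ (T (k+1)) * (1/N) - (K/N) * (1/N) := by ring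
      rw [expand] at hmono2
      linarith
    have hNn : (0:ℝ) ≤ 1/N := by positivity
    calc |s ((A (k+1) : ℝ)/N) - φ ((B (k+1) : ℝ)/N)| * (1/N)
        ≤ (Fγ (T (k+1)) + K * (1/N)) * (1/N) := mul_le_mul_of_nonneg_right step1 hNn
      _ = Fγ (T (k+1)) * (1/N) + (K/N) * (1/N) := by ring
      _ ≤ ((∫ t in T k..T (k+1), FD t) + (K/N) * (1/N)) + (K/N) * (1/N) := by linarith [step2]
      _ = (∫ t in T k..T (k+1), FD t) + (2*K/N) * (1/N) := by ring
  -- weights are 1/N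
  have hw : ∀ k < 2*N,
      (|(A (k+1) : ℝ) - (A k : ℝ)| + |(B (k+1) : ℝ) - (B k : ℝ)|)/N = 1/N := by
    intro k hk
    have h1 := hAmono k hk
    have h2 := hAstep k hk
    have h3 := hAlek k (by omega)
    have h4 := hAlek (k+1) (by omega)
    have c1 : A k + B k = k := by simp only [hBdef]; omega
    have c2 : A (k+1) + B (k+1) = k+1 := by simp only [hBdef]; omega
    have hBmono : B k ≤ B (k+1) := by simp only [hBdef]; omega
    have c1' : (A k : ℝ) + B k = k := by exact_mod_cast c1
    have c2' : (A (k+1) : ℝ) + B (k+1) = (k:ℝ)+1 := by exact_mod_cast c2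
    rw [abs_of_nonneg (sub_nonneg.2 (by exact_mod_cast h1 : (A k:ℝ) ≤ A (k+1))),
      abs_of_nonneg (sub_nonneg.2 (by exact_mod_cast hBmono : (B k:ℝ) ≤ B (k+1)))]
    have : (A (k+1):ℝ) - A k + ((B (k+1):ℝ) - B k) = 1 := by linarith
    rw [show (A (k+1):ℝ) - A k + ((B (k+1):ℝ) - B k) = 1 from this]
  -- assemble
  refine ⟨2*N, A, B, hpath, ?_⟩
  have hsum1 : ∀ k ∈ Finset.range (2*N),
      |s ((A (k+1) : ℝ)/N) - φ ((B (k+1) : ℝ)/N)| *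
        ((|(A (k+1) : ℝ) - (A k : ℝ)| + |(B (k+1) : ℝ) - (B k : ℝ)|)/N)
      ≤ (∫ t in T k..T (k+1), FD t) + (2*K/N) * (1/N) := by
    intro k hk
    rw [Finset.mem_range] at hk
    rw [hw k hk]
    exact key k hk
  have hsum := Finset.sum_le_sum hsum1
  rw [Finset.sum_add_distrib, Finset.sum_const, Finset.card_range] at hsum
  have hadj : ∑ k ∈ Finset.range (2*N), (∫ t in T k..T (k+1), FD t)
      = ∫ t in (T 0)..(T (2*N)), FD t := by
    apply intervalIntegral.sum_integral_adjacent_intervals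
    intro k hk
    exact hFDint _ _ (hTmem k (by omega)).1 (hTmem (k+1) (by omega)).1
      (hTmono k (k+1) (by omega) (by omega))
  have hT2I := (hTmem (2*N) le_rfl).1
  have hle2 : (∫ t in (T 0)..(T (2*N)), FD t) ≤ warpCost s φ g₁ g₂ := by
    have esplit : warpCost s φ g₁ g₂
        = (∫ t in (0:ℝ)..T (2*N), FD t) + ∫ t in T (2*N)..(1:ℝ), FD t := by
      rw [hwc, ← intervalIntegral.integral_add_adjacent_intervals
        (hFDint 0 (T (2*N)) ⟨le_rfl, zero_le_one⟩ hT2I hT2I.1)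
        (hFDint (T (2*N)) 1 hT2I ⟨zero_le_one, le_rfl⟩ hT2I.2)]
    have hnn : 0 ≤ ∫ t in T (2*N)..(1:ℝ), FD t :=
      intervalIntegral.integral_nonneg hT2I.2
        (fun u hu => hFDnn u ⟨le_trans hT2I.1 hu.1, hu.2⟩)
    rw [esplit, hT0]
    linarith
  have hconst : (2*N : ℕ) • ((2*K/N) * (1/N)) = 4*K/N := by
    rw [nsmul_eq_mul]
    push_cast
    field_simp
    ring
  rw [hadj, hconst] at hsum
  calc (∑ i ∈ Finset.range (2*N),
        |s ((A (i + 1) : ℝ) / N) - φ ((B (i + 1) : ℝ) / N)| *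
          ((|(A (i + 1) : ℝ) - (A i : ℝ)| + |(B (i + 1) : ℝ) - (B i : ℝ)|) / N))
      ≤ (∫ t in (T 0)..(T (2*N)), FD t) + 4*K/N := hsum
    _ ≤ warpCost s φ g₁ g₂ + 4*(Ms+Mφ)/N := by rw [← hK]; linarith

set_option maxHeartbeats 2000000 in
lemma direction2 {s φ : ℝ → ℝ}
    (hsc : ContinuousOn s (Set.Icc 0 1)) (hφc : ContinuousOn φ (Set.Icc 0 1))
    {Ms Mφ : ℝ} (hMs0 : 0 ≤ Ms) (hMφ0 : 0 ≤ Mφ)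
    (hLs : ∀ x ∈ Set.Icc (0:ℝ) 1, ∀ y ∈ Set.Icc (0:ℝ) 1, |s y - s x| ≤ Ms * |y - x|)
    (hLφ : ∀ x ∈ Set.Icc (0:ℝ) 1, ∀ y ∈ Set.Icc (0:ℝ) 1, |φ y - φ x| ≤ Mφ * |y - x|)
    (N L : ℕ) (hN : 0 < N) (p q : ℕ → ℕ) (hpath : DTWPath N L p q) :
    ∃ G₁ G₂ : ℝ → ℝ, InG G₁ ∧ InG G₂ ∧
      warpCost s φ G₁ G₂ ≤ (∑ i ∈ Finset.range L,
        |s ((p (i+1) : ℝ)/N) - φ ((q (i+1) : ℝ)/N)| *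
          ((|(p (i+1) : ℝ) - (p i : ℝ)| + |(q (i+1) : ℝ) - (q i : ℝ)|)/N))
        + 2*(Ms+Mφ)/N := by
  classical
  obtain ⟨hp0, hq0, hpL, hqL, hNL, hL2N, hstep1, hstep2⟩ := hpath
  have hL : 0 < L := lt_of_lt_of_le hN hNL
  have hNR : (0:ℝ) < N := by exact_mod_cast hN
  have hLR : (0:ℝ) < L := by exact_mod_cast hL
  set K := Ms + Mφ with hK
  have hK0 : 0 ≤ K := by positivity
  obtain ⟨G₁, hInG1, hval1, hder1, hmono1⟩ := pl_interp N L hN hL p hp0 hpL hstep1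
  obtain ⟨G₂, hInG2, hval2, hder2, hmono2⟩ := pl_interp N L hN hL q hq0 hqL hstep2
  refine ⟨G₁, G₂, hInG1, hInG2, ?_⟩
  -- monotonicity of p, q in indices
  have hpmono : ∀ j, j ≤ L → ∀ i, i ≤ j → p i ≤ p j := by
    intro j
    induction j with
    | zero =>
      intro _ i hi
      have : i = 0 := by omega
      rw [this]
    | succ n ih =>
      intro hjL i hij
      rcases Nat.eq_or_lt_of_le hij with heq | hlt
      · rw [heq]
      · have h1 : p i ≤ p n := ih (by omega) i (by omega)
        have h2 := (hstep1 n (by omega)).1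
        omega
  have hqmono : ∀ j, j ≤ L → ∀ i, i ≤ j → q i ≤ q j := by
    intro j
    induction j with
    | zero =>
      intro _ i hi
      have : i = 0 := by omega
      rw [this]
    | succ n ih =>
      intro hjL i hij
      rcases Nat.eq_or_lt_of_le hij with heq | hlt
      · rw [heq]
      · have h1 : q i ≤ q n := ih (by omega) i (by omega)
        have h2 := (hstep2 n (by omega)).1
        omega
  have hpleN : ∀ j ≤ L, p j ≤ N := by
    intro j hj
    have := hpmono L le_rfl j hj
    omega
  have hqleN : ∀ j ≤ L, q j ≤ N := by
    intro j hj
    have := hqmono L le_rfl j hj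
    omega
  set a : ℕ → ℝ := fun k => (k:ℝ)/L with hadef
  have ha0 : a 0 = 0 := by simp [hadef]
  have haL : a L = 1 := by rw [hadef]; field_simp
  have hamem : ∀ k ≤ L, a k ∈ Set.Icc (0:ℝ) 1 := by
    intro k hk
    constructor
    · positivity
    · rw [hadef]
      simp only
      rw [div_le_one hLR]
      exact_mod_cast hk
  have hale : ∀ k, a k ≤ a (k+1) := by
    intro k
    rw [hadef]
    simp only
    exact div_le_div_of_nonneg_right (by push_cast; linarith) hLR.le
  have hacast : ∀ k : ℕ, a (k+1) = ((k:ℝ)+1)/L := by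
    intro k
    rw [hadef]
    push_cast
    ring
  set d1 : ℕ → ℝ := fun i => ((p (i+1) - p i : ℕ):ℝ) with hd1def
  set d2 : ℕ → ℝ := fun i => ((q (i+1) - q i : ℕ):ℝ) with hd2def
  have hd1e : ∀ i < L, d1 i = (p (i+1):ℝ) - (p i : ℝ) := by
    intro i hi
    rw [hd1def]
    push_cast [Nat.cast_sub (hstep1 i hi).1]
    ring
  have hd2e : ∀ i < L, d2 i = (q (i+1):ℝ) - (q i : ℝ) := by
    intro i hi
    rw [hd2def]
    push_cast [Nat.cast_sub (hstep2 i hi).1]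
    ring
  have hd1nn : ∀ i, 0 ≤ d1 i := fun i => Nat.cast_nonneg _
  have hd2nn : ∀ i, 0 ≤ d2 i := fun i => Nat.cast_nonneg _
  set FD : ℝ → ℝ := fun t => |s (G₁ t) - φ (G₂ t)| * (deriv G₁ t + deriv G₂ t) with hFDdef
  set Ik : ℕ → ℝ → ℝ :=
    fun k t => |s (G₁ t) - φ (G₂ t)| * ((L:ℝ)*(d1 k + d2 k)/N) with hIkdef
  have hsubI : ∀ k, k < L → Set.Icc (a k) (a (k+1)) ⊆ Set.Icc (0:ℝ) 1 := by
    intro k hk t ht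
    exact ⟨le_trans (hamem k (by omega)).1 ht.1, le_trans ht.2 (hamem (k+1) (by omega)).2⟩
  have hcont12 : ∀ k, k < L → ContinuousOn (fun t => |s (G₁ t) - φ (G₂ t)|)
      (Set.Icc (a k) (a (k+1))) := by
    intro k hk
    apply ContinuousOn.abs
    apply ContinuousOn.sub
    · exact hsc.comp ((hInG1.1.1.1).mono (hsubI k hk))
        (fun t ht => InG_maps_Icc hInG1 (hsubI k hk ht))
    · exact hφc.comp ((hInG2.1.1.1).mono (hsubI k hk))
        (fun t ht => InG_maps_Icc hInG2 (hsubI k hk ht))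
  have hIkcont : ∀ k, k < L → ContinuousOn (Ik k) (Set.Icc (a k) (a (k+1))) :=
    fun k hk => (hcont12 k hk).mul continuousOn_const
  have hIkint : ∀ k, k < L → IntervalIntegrable (Ik k) volume (a k) (a (k+1)) := by
    intro k hk
    apply ContinuousOn.intervalIntegrable
    rw [Set.uIcc_of_le (hale k)]
    exact hIkcont k hk
  have hFDIk : ∀ k, k < L → ∀ t ∈ Set.Ioo (a k) (a (k+1)), FD t = Ik k t := by
    intro k hk t ht
    have ht' : t ∈ Set.Ioo ((k:ℝ)/L) (((k:ℝ)+1)/L) := by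
      rw [← hacast k]
      exact ht
    have e1 : deriv G₁ t = (L:ℝ) * d1 k / N := (hder1 k hk t ht').deriv
    have e2 : deriv G₂ t = (L:ℝ) * d2 k / N := (hder2 k hk t ht').deriv
    rw [hFDdef, hIkdef]
    simp only
    rw [e1, e2]
    ring
  have hFDint : ∀ k, k < L → IntervalIntegrable FD volume (a k) (a (k+1)) := by
    intro k hk
    rw [intervalIntegrable_iff_integrableOn_Ioc_of_le (hale k)]
    have hIk : IntegrableOn (Ik k) (Set.Ioc (a k) (a (k+1))) := by
      have := hIkint k hk
      rwa [intervalIntegrable_iff_integrableOn_Ioc_of_le (hale k)] at this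
    apply hIk.congr_fun_ae
    have hsing : (volume.restrict (Set.Ioc (a k) (a (k+1)))) {a (k+1)} = 0 :=
      le_antisymm (le_trans (Measure.restrict_le_self _) (le_of_eq (measure_singleton _))) zero_le
    have hne : ∀ᵐ t ∂(volume.restrict (Set.Ioc (a k) (a (k+1)))), t ≠ a (k+1) := by
      rw [ae_iff]
      convert hsing using 2
      ext x
      simp
    filter_upwards [ae_restrict_mem measurableSet_Ioc, hne] with t ht htne
    exact ((hFDIk k hk t ⟨ht.1, lt_of_le_of_ne ht.2 htne⟩)).symm
  have hinteq : ∀ k, k < L → (∫ t in a k..a (k+1), FD t) = ∫ t in a k..a (k+1), Ik k t := by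
    intro k hk
    apply intervalIntegral.integral_congr_ae
    have hne : ∀ᵐ (t:ℝ), t ≠ a (k+1) := by
      rw [ae_iff]
      have : {t : ℝ | ¬ t ≠ a (k+1)} = {a (k+1)} := by
        ext x; simp
      rw [this]
      exact measure_singleton _
    filter_upwards [hne] with t htne htI
    rw [Set.uIoc_of_le (hale k)] at htI
    exact hFDIk k hk t ⟨htI.1, lt_of_le_of_ne htI.2 htne⟩
  -- pointwise bound on each piece
  have hbd : ∀ k, k < L → ∀ t ∈ Set.Icc (a k) (a (k+1)),
      |s (G₁ t) - φ (G₂ t)| ≤ |s ((p (k+1) : ℝ)/N) - φ ((q (k+1) : ℝ)/N)| + K * (1/N) := by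
    intro k hk t ht
    have htI := hsubI k hk ht
    have hG1t : G₁ t ∈ Set.Icc ((p k : ℝ)/N) ((p (k+1) : ℝ)/N) := by
      constructor
      · rw [← hval1 k (by omega)]
        exact hmono1 ht.1
      · rw [← hval1 (k+1) (by omega)]
        exact hmono1 ht.2
    have hG2t : G₂ t ∈ Set.Icc ((q k : ℝ)/N) ((q (k+1) : ℝ)/N) := by
      constructor
      · rw [← hval2 k (by omega)]
        exact hmono2 ht.1
      · rw [← hval2 (k+1) (by omega)]
        exact hmono2 ht.2
    have hpc : (p (k+1) : ℝ) ≤ (p k : ℝ) + 1 := by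
      exact_mod_cast (hstep1 k hk).2
    have hqc : (q (k+1) : ℝ) ≤ (q k : ℝ) + 1 := by
      exact_mod_cast (hstep2 k hk).2
    have hud : |G₁ t - (p (k+1) : ℝ)/N| ≤ 1/N := by
      rw [abs_le]
      constructor
      · have : ((p k : ℝ))/N ≥ ((p (k+1) : ℝ) - 1)/N :=
          div_le_div_of_nonneg_right (by linarith) hNR.le
        have := hG1t.1
        rw [sub_div] at *
        linarith
      · have := hG1t.2
        have hpos : (0:ℝ) < 1/N := by positivity
        linarith
    have hvd : |G₂ t - (q (k+1) : ℝ)/N| ≤ 1/N := by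
      rw [abs_le]
      constructor
      · have : ((q k : ℝ))/N ≥ ((q (k+1) : ℝ) - 1)/N :=
          div_le_div_of_nonneg_right (by linarith) hNR.le
        have := hG2t.1
        rw [sub_div] at *
        linarith
      · have := hG2t.2
        have hpos : (0:ℝ) < 1/N := by positivity
        linarith
    have hG1I : G₁ t ∈ Set.Icc (0:ℝ) 1 := InG_maps_Icc hInG1 htI
    have hG2I : G₂ t ∈ Set.Icc (0:ℝ) 1 := InG_maps_Icc hInG2 htI
    have hpI : ((p (k+1):ℝ))/N ∈ Set.Icc (0:ℝ) 1 := by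
      constructor
      · positivity
      · rw [div_le_one hNR]
        exact_mod_cast hpleN (k+1) (by omega)
    have hqI : ((q (k+1):ℝ))/N ∈ Set.Icc (0:ℝ) 1 := by
      constructor
      · positivity
      · rw [div_le_one hNR]
        exact_mod_cast hqleN (k+1) (by omega)
    have e1 : |s (G₁ t) - s ((p (k+1):ℝ)/N)| ≤ Ms * (1/N) := by
      have := hLs _ hpI _ hG1I
      calc |s (G₁ t) - s ((p (k+1):ℝ)/N)| ≤ Ms * |G₁ t - (p (k+1):ℝ)/N| := this
        _ ≤ Ms * (1/N) := mul_le_mul_of_nonneg_left hud hMs0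
    have e2 : |φ (G₂ t) - φ ((q (k+1):ℝ)/N)| ≤ Mφ * (1/N) := by
      have := hLφ _ hqI _ hG2I
      calc |φ (G₂ t) - φ ((q (k+1):ℝ)/N)| ≤ Mφ * |G₂ t - (q (k+1):ℝ)/N| := this
        _ ≤ Mφ * (1/N) := mul_le_mul_of_nonneg_left hvd hMφ0
    have tri : |s (G₁ t) - φ (G₂ t)|
        ≤ |s (G₁ t) - s ((p (k+1):ℝ)/N)| + |s ((p (k+1):ℝ)/N) - φ ((q (k+1):ℝ)/N)|
          + |φ ((q (k+1):ℝ)/N) - φ (G₂ t)| := by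
      calc |s (G₁ t) - φ (G₂ t)|
          ≤ |s (G₁ t) - s ((p (k+1):ℝ)/N)| + |s ((p (k+1):ℝ)/N) - φ (G₂ t)| := abs_sub_le _ _ _
        _ ≤ |s (G₁ t) - s ((p (k+1):ℝ)/N)|
            + (|s ((p (k+1):ℝ)/N) - φ ((q (k+1):ℝ)/N)| + |φ ((q (k+1):ℝ)/N) - φ (G₂ t)|) := by
            linarith [abs_sub_le (s ((p (k+1):ℝ)/N)) (φ ((q (k+1):ℝ)/N)) (φ (G₂ t))]
        _ = _ := by ring
    rw [abs_sub_comm (φ ((q (k+1):ℝ)/N))] at tri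
    rw [hK]
    linarith
  -- integral bound on each piece
  have hpiecebd : ∀ k, k < L → (∫ t in a k..a (k+1), FD t)
      ≤ (|s ((p (k+1) : ℝ)/N) - φ ((q (k+1) : ℝ)/N)| + K * (1/N)) * ((d1 k + d2 k)/N) := by
    intro k hk
    rw [hinteq k hk]
    have hconst : IntervalIntegrable
        (fun _ : ℝ => (|s ((p (k+1) : ℝ)/N) - φ ((q (k+1) : ℝ)/N)| + K * (1/N)) * ((L:ℝ)*(d1 k + d2 k)/N))
        volume (a k) (a (k+1)) := intervalIntegrable_const
    have hcc : (0:ℝ) ≤ (L:ℝ)*(d1 k + d2 k)/N := by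
      have := hd1nn k
      have := hd2nn k
      positivity
    have hmono' := intervalIntegral.integral_mono_on (hale k) (hIkint k hk) hconst
      (fun t ht => by
        rw [hIkdef]
        simp only
        exact mul_le_mul_of_nonneg_right (hbd k hk t ht) hcc)
    rw [intervalIntegral.integral_const] at hmono'
    have hlen : a (k+1) - a k = 1/L := by
      rw [hacast k, hadef]
      simp only
      field_simp
      ring
    rw [hlen] at hmono'
    have : (1/(L:ℝ)) • ((|s ((p (k+1) : ℝ)/N) - φ ((q (k+1) : ℝ)/N)| + K * (1/N)) * ((L:ℝ)*(d1 k + d2 k)/N))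
        = (|s ((p (k+1) : ℝ)/N) - φ ((q (k+1) : ℝ)/N)| + K * (1/N)) * ((d1 k + d2 k)/N) := by
      rw [smul_eq_mul]
      field_simp
    rw [this] at hmono'
    exact hmono'
  -- sum up
  have hwceq : warpCost s φ G₁ G₂ = ∑ k ∈ Finset.range L, ∫ t in a k..a (k+1), FD t := by
    rw [intervalIntegral.sum_integral_adjacent_intervals (fun k hk => hFDint k hk)]
    rw [ha0, haL]
    rfl
  have hsum := Finset.sum_le_sum (fun k hk => hpiecebd k (Finset.mem_range.1 hk))
  rw [← hwceq] at hsum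
  have hexpand : ∀ k ∈ Finset.range L,
      (|s ((p (k+1) : ℝ)/N) - φ ((q (k+1) : ℝ)/N)| + K * (1/N)) * ((d1 k + d2 k)/N)
      = |s ((p (k+1) : ℝ)/N) - φ ((q (k+1) : ℝ)/N)| *
          ((|(p (k+1) : ℝ) - (p k : ℝ)| + |(q (k+1) : ℝ) - (q k : ℝ)|)/N)
        + (K/N) * ((d1 k + d2 k)/N) := by
    intro k hk
    rw [Finset.mem_range] at hk
    have hab1 : |(p (k+1) : ℝ) - (p k : ℝ)| = d1 k := by
      rw [hd1e k hk]
      exact abs_of_nonneg (by rw [← hd1e k hk]; exact hd1nn k)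
    have hab2 : |(q (k+1) : ℝ) - (q k : ℝ)| = d2 k := by
      rw [hd2e k hk]
      exact abs_of_nonneg (by rw [← hd2e k hk]; exact hd2nn k)
    rw [hab1, hab2]
    ring
  rw [Finset.sum_congr rfl hexpand, Finset.sum_add_distrib] at hsum
  have hd1sum : ∑ k ∈ Finset.range L, d1 k = (N:ℝ) := by
    have : ∑ k ∈ Finset.range L, d1 k = ∑ k ∈ Finset.range L, ((p (k+1):ℝ) - (p k:ℝ)) :=
      Finset.sum_congr rfl (fun k hk => hd1e k (Finset.mem_range.1 hk))
    rw [this, Finset.sum_range_sub (fun i => (p i : ℝ)), hp0, hpL]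
    simp
  have hd2sum : ∑ k ∈ Finset.range L, d2 k = (N:ℝ) := by
    have : ∑ k ∈ Finset.range L, d2 k = ∑ k ∈ Finset.range L, ((q (k+1):ℝ) - (q k:ℝ)) :=
      Finset.sum_congr rfl (fun k hk => hd2e k (Finset.mem_range.1 hk))
    rw [this, Finset.sum_range_sub (fun i => (q i : ℝ)), hq0, hqL]
    simp
  have herr : ∑ k ∈ Finset.range L, (K/N) * ((d1 k + d2 k)/N) = 2*K/N := by
    rw [← Finset.mul_sum]
    have : ∑ k ∈ Finset.range L, (d1 k + d2 k)/N
        = (∑ k ∈ Finset.range L, d1 k + ∑ k ∈ Finset.range L, d2 k)/N := by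
      rw [← Finset.sum_add_distrib, Finset.sum_div]
    rw [this, hd1sum, hd2sum]
    field_simp
    ring
  rw [herr] at hsum
  rw [hK]
  calc warpCost s φ G₁ G₂
      ≤ (∑ k ∈ Finset.range L, |s ((p (k+1) : ℝ)/N) - φ ((q (k+1) : ℝ)/N)| *
          ((|(p (k+1) : ℝ) - (p k : ℝ)| + |(q (k+1) : ℝ) - (q k : ℝ)|)/N)) + 2*K/N := hsum
    _ = _ := by rw [hK]

/-- CDTW is approximated by the weighted discrete DTW of the
discretizations `s̄(j) = s(j/N)`, `φ̄(j) = φ(j/N)`, for a fine enough step `Δ = 1/N`. -/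
theorem CDTW_DTW_approx (s φ : ℝ → ℝ) (hs : C1FF s) (hφ : C1FF φ)
    (Ms Mφ : ℝ)
    (hMs : ∀ x ∈ Set.Icc (0:ℝ) 1, |deriv s x| ≤ Ms)
    (hMφ : ∀ x ∈ Set.Icc (0:ℝ) 1, |deriv φ x| ≤ Mφ) :
    ∀ ε > 0, ∃ δ > 0, ∀ N : ℕ, 0 < N → (1 : ℝ) / N ≤ δ →
      |CDTW s φ - DTWw N (fun j => s ((j : ℝ) / N)) (fun j => φ ((j : ℝ) / N))| < ε := by
  intro ε hε
  obtain ⟨⟨hscont, Ss, hsd, -⟩, -⟩ := hs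
  obtain ⟨⟨hφcont, Sφ, hφd, -⟩, -⟩ := hφ
  have hMs0 : 0 ≤ Ms := le_trans (abs_nonneg _) (hMs 0 ⟨le_rfl, zero_le_one⟩)
  have hMφ0 : 0 ≤ Mφ := le_trans (abs_nonneg _) (hMφ 0 ⟨le_rfl, zero_le_one⟩)
  have hLs := lipschitz_of_bddDeriv hscont Ss hsd hMs
  have hLφ := lipschitz_of_bddDeriv hφcont Sφ hφd hMφ
  set K := Ms + Mφ with hK
  have hK0 : 0 ≤ K := by positivity
  refine ⟨ε/(4*K + 4), by positivity, ?_⟩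
  intro N hN hΔ
  have hNR : (0:ℝ) < N := by exact_mod_cast hN
  set sb : ℕ → ℝ := fun j => s ((j : ℝ) / N) with hsbdef
  set fb : ℕ → ℝ := fun j => φ ((j : ℝ) / N) with hfbdef
  set DS : Set ℝ := {c : ℝ | ∃ (L : ℕ) (g1 g2 : ℕ → ℕ), DTWPath N L g1 g2 ∧
    (∑ i ∈ Finset.range L,
      |sb (g1 (i + 1)) - fb (g2 (i + 1))| *
        ((|(g1 (i + 1) : ℝ) - (g1 i : ℝ)| + |(g2 (i + 1) : ℝ) - (g2 i : ℝ)|) / N)) = c} with hDSdef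
  set CS : Set ℝ := {c : ℝ | ∃ g₁ g₂ : ℝ → ℝ, InG g₁ ∧ InG g₂ ∧ warpCost s φ g₁ g₂ = c} with hCSdef
  have hDTWeq : DTWw N sb fb = sInf DS := rfl
  have hCDTWeq : CDTW s φ = sInf CS := rfl
  have hDSne : DS.Nonempty := DTW_set_nonempty N hN sb fb
  have hDSbdd : BddBelow DS := DTW_set_bddBelow N sb fb
  have hCSne : CS.Nonempty := CDTW_set_nonempty s φ
  have hCSbdd : BddBelow CS := CDTW_set_bddBelow s φ
  -- direction 1 : DTWw ≤ CDTW + 4K/N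
  have hdir1 : sInf DS - 4*K/N ≤ sInf CS := by
    apply le_csInf hCSne
    intro c hc
    obtain ⟨g₁, g₂, hg₁, hg₂, rfl⟩ := hc
    obtain ⟨L, p, q, hpath, hsum⟩ := direction1 hg₁ hg₂ hscont hφcont hMs0 hMφ0 hLs hLφ N hN
    have hmem : (∑ i ∈ Finset.range L,
        |sb (p (i + 1)) - fb (q (i + 1))| *
          ((|(p (i + 1) : ℝ) - (p i : ℝ)| + |(q (i + 1) : ℝ) - (q i : ℝ)|) / N)) ∈ DS :=
      ⟨L, p, q, hpath, rfl⟩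
    have h1 : sInf DS ≤ ∑ i ∈ Finset.range L,
        |sb (p (i + 1)) - fb (q (i + 1))| *
          ((|(p (i + 1) : ℝ) - (p i : ℝ)| + |(q (i + 1) : ℝ) - (q i : ℝ)|) / N) :=
      csInf_le hDSbdd hmem
    have h2 : (∑ i ∈ Finset.range L,
        |sb (p (i + 1)) - fb (q (i + 1))| *
          ((|(p (i + 1) : ℝ) - (p i : ℝ)| + |(q (i + 1) : ℝ) - (q i : ℝ)|) / N))
        ≤ warpCost s φ g₁ g₂ + 4 * (Ms + Mφ) / N := hsum
    rw [← hK] at h2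
    linarith
  -- direction 2 : CDTW ≤ DTWw + 2K/N
  have hdir2 : sInf CS - 2*K/N ≤ sInf DS := by
    apply le_csInf hDSne
    intro c hc
    obtain ⟨L, p, q, hpath, rfl⟩ := hc
    obtain ⟨G₁, G₂, hG₁, hG₂, hwle⟩ :=
      direction2 hscont hφcont hMs0 hMφ0 hLs hLφ N L hN p q hpath
    have hmem : warpCost s φ G₁ G₂ ∈ CS := ⟨G₁, G₂, hG₁, hG₂, rfl⟩
    have h1 : sInf CS ≤ warpCost s φ G₁ G₂ := csInf_le hCSbdd hmem
    rw [← hK] at hwle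
    linarith
  -- conclude
  rw [hCDTWeq, hDTWeq]
  rw [abs_sub_lt_iff]
  have hδN : 4*K/N ≤ 4*K*(ε/(4*K + 4)) := by
    have : 4*K/N = 4*K*(1/N) := by ring
    rw [this]
    exact mul_le_mul_of_nonneg_left hΔ (by positivity)
  have hfin : 4*K*(ε/(4*K + 4)) < ε := by
    rw [div_eq_mul_inv, ← mul_assoc]
    have h4 : (0:ℝ) < 4*K + 4 := by positivity
    rw [show 4*K*ε*(4*K+4)⁻¹ = (4*K*ε)/(4*K+4) from by ring, div_lt_iff₀ h4]
    nlinarith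
  have h2K : 2*K/N ≤ 4*K/N := by
    apply div_le_div_of_nonneg_right ?_ hNR.le
    linarith
  constructor
  · linarith
  · linarith
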